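/- If the block operator M = [[A, X],[X*, B]] on H ⊕ H is positive, then R(X) ⊆ R(A^{1/2}) and R(X*) ⊆ R(B^{1/2}). -/

import Mathlib

open ContinuousLinearMap

variable {H : Type*} [NormedAddCommGroup H] [InnerProductSpace ℂ H] [CompleteSpace H]

private lemma quad_aux (a b m : ℝ) (ha : 0 ≤ a) (hb : 0 ≤ b) (hm : 0 ≤ m)
    (h : ∀ t : ℝ, 0 < t → 2*t*m ≤ a*t^2 + b) : m^2 ≤ a*b := by
  rcases eq_or_lt_of_le hm with hm0 | hm0
  · nlinarith
  rcases eq_or_lt_of_le ha with ha0 | ha0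
  · exfalso
    have ht := h ((b+1)/(2*m)) (by positivity)
    rw [← ha0] at ht
    have hm' : m ≠ 0 := ne_of_gt hm0
    have : (2 * ((b+1)/(2*m)) * m) = b + 1 := by field_simp
    nlinarith
  · have ht := h (m/a) (by positivity)
    have h2 : 2*(m/a)*m = 2*(m^2/a) := by ring
    have h3 : a*(m/a)^2 = m^2/a := by field_simp
    rw [h2, h3] at ht
    have : m^2/a ≤ b := by linarith
    calc m^2 = (m^2/a)*a := by field_simp
    _ ≤ b*a := by exact mul_le_mul_of_nonneg_right this ha
    _ = a*b := by ring

private lemma mem_range_of_inner_le (S : H →L[ℂ] H) (hS : IsSelfAdjoint S) (b : H) (c : ℝ)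
    (h : ∀ x : H, ‖(inner ℂ b x : ℂ)‖ ≤ c * ‖S x‖) : b ∈ Set.range S := by
  set Sl : H →ₗ[ℂ] H := (S : H →ₗ[ℂ] H) with hSl
  have hker : LinearMap.ker Sl ≤ LinearMap.ker ((innerSL ℂ b).toLinearMap) := by
    intro x hx
    have hx' : S x = 0 := hx
    have := h x
    rw [hx', norm_zero, mul_zero] at this
    have h0 : ‖(inner ℂ b x : ℂ)‖ ≤ 0 := this
    simp only [LinearMap.mem_ker, ContinuousLinearMap.coe_coe, innerSL_apply_apply]
    exact norm_le_zero_iff.mp h0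
  set f₁ : (H ⧸ LinearMap.ker Sl) →ₗ[ℂ] ℂ :=
    Submodule.liftQ _ ((innerSL ℂ b).toLinearMap) hker with hf₁
  set e := Sl.quotKerEquivRange with he
  set f₀ : (LinearMap.range Sl) →ₗ[ℂ] ℂ := f₁ ∘ₗ (e.symm : _ →ₗ[ℂ] _) with hf₀
  have hbound : ∀ u : LinearMap.range Sl, ‖f₀ u‖ ≤ c * ‖(u : H)‖ := by
    rintro ⟨u, x, rfl⟩
    have hx : e (Submodule.Quotient.mk x) = ⟨Sl x, LinearMap.mem_range_self _ x⟩ :=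
      Subtype.ext (Sl.quotKerEquivRange_apply_mk x)
    have : e.symm ⟨Sl x, LinearMap.mem_range_self _ x⟩ = Submodule.Quotient.mk x := by
      rw [← hx, LinearEquiv.symm_apply_apply]
    simp only [hf₀, LinearMap.comp_apply, LinearEquiv.coe_coe, this, hf₁,
      Submodule.liftQ_apply, ContinuousLinearMap.coe_coe, innerSL_apply_apply]
    exact h x
  set f : (LinearMap.range Sl) →L[ℂ] ℂ := f₀.mkContinuous c hbound with hf
  obtain ⟨g, hg, -⟩ := exists_extension_norm_eq (LinearMap.range Sl) f
  set w := (InnerProductSpace.toDual ℂ H).symm g with hw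
  have hwx : ∀ x : H, (inner ℂ w x : ℂ) = g x := fun x => by
    simp [hw, InnerProductSpace.toDual_symm_apply]
  refine ⟨w, ?_⟩
  refine ext_inner_left ℂ (fun x => ?_)
  have h1 : (inner ℂ w (S x) : ℂ) = inner ℂ b x := by
    rw [hwx]
    have := hg ⟨S x, LinearMap.mem_range_self Sl x⟩
    rw [this]
    have hx : e (Submodule.Quotient.mk x) = ⟨Sl x, LinearMap.mem_range_self _ x⟩ :=
      Subtype.ext (Sl.quotKerEquivRange_apply_mk x)
    have h2 : e.symm ⟨Sl x, LinearMap.mem_range_self _ x⟩ = Submodule.Quotient.mk x := by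
      rw [← hx, LinearEquiv.symm_apply_apply]
    simp only [hf, LinearMap.mkContinuous_apply, hf₀, LinearMap.comp_apply,
      LinearEquiv.coe_coe]
    rw [show (⟨S x, _⟩ : LinearMap.range Sl) = ⟨Sl x, LinearMap.mem_range_self _ x⟩ from rfl, h2]
    simp [hf₁]
  calc (inner ℂ x (S w) : ℂ) = inner ℂ ((adjoint S) x) w :=
        (ContinuousLinearMap.adjoint_inner_left S w x).symm
  _ = inner ℂ (S x) w := by rw [hS.adjoint_eq]
  _ = starRingEnd ℂ (inner ℂ w (S x)) := (inner_conj_symm _ _).symm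
  _ = starRingEnd ℂ (inner ℂ b x : ℂ) := by rw [h1]
  _ = inner ℂ x b := by rw [inner_conj_symm]

/-- The 2×2 block operator `[[A, X],[Y, B]]` acting on the Hilbert space `H ⊕ H`
(realized as `WithLp 2 (H × H)`). -/
noncomputable def blockOperator (A X Y B : H →L[ℂ] H) :
    WithLp 2 (H × H) →L[ℂ] WithLp 2 (H × H) :=
  (WithLp.prodContinuousLinearEquiv 2 ℂ H H).symm.toContinuousLinearMap ∘L
    ((A ∘L ContinuousLinearMap.fst ℂ H H + X ∘L ContinuousLinearMap.snd ℂ H H).prod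
      (Y ∘L ContinuousLinearMap.fst ℂ H H + B ∘L ContinuousLinearMap.snd ℂ H H)) ∘L
    (WithLp.prodContinuousLinearEquiv 2 ℂ H H).toContinuousLinearMap

/-- If `[[A, X],[X*, B]] ≥ 0` then `R(X) ⊆ R(A^{1/2})` and `R(X*) ⊆ R(B^{1/2})`,
where the square roots are characterized as positive operators squaring to `A`, `B`. -/
theorem blockOperator_isPositive_range_subset
    (A B X SA SB : H →L[ℂ] H)
    (hM : (blockOperator A X (adjoint X) B).IsPositive)
    (hSA : SA.IsPositive) (hSA2 : SA ∘L SA = A)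
    (hSB : SB.IsPositive) (hSB2 : SB ∘L SB = B) :
    Set.range X ⊆ Set.range SA ∧ Set.range (adjoint X) ⊆ Set.range SB := by
  -- Step 1: basic positivity inequality
  have pos : ∀ u v : H,
      0 ≤ RCLike.re (inner ℂ (A u) u : ℂ) + RCLike.re (inner ℂ (B v) v : ℂ)
        + 2 * RCLike.re (inner ℂ (X v) u : ℂ) := by
    intro u v
    have h := hM.2 ((WithLp.prodContinuousLinearEquiv 2 ℂ H H).symm (u, v))
    rw [ContinuousLinearMap.reApplyInnerSelf] at h
    simp only [blockOperator, ContinuousLinearMap.comp_apply, ContinuousLinearEquiv.coe_coe,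
      ContinuousLinearEquiv.apply_symm_apply, ContinuousLinearMap.prod_apply,
      ContinuousLinearMap.add_apply, ContinuousLinearMap.coe_fst', ContinuousLinearMap.coe_snd',
      WithLp.prod_inner_apply, WithLp.prodContinuousLinearEquiv_symm_apply,
      WithLp.prodContinuousLinearEquiv_apply, Equiv.apply_symm_apply, WithLp.ofLp_toLp] at h
    simp only [inner_add_left, map_add] at h
    have hadj : (inner ℂ ((adjoint X) u) v : ℂ) = inner ℂ u (X v) := adjoint_inner_left X v u
    rw [hadj] at h
    have hre : RCLike.re (inner ℂ u (X v) : ℂ) = RCLike.re (inner ℂ (X v) u : ℂ) :=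
      inner_re_symm _ _
    linarith
  -- re ⟪A u, u⟫ = ‖SA u‖²
  have hAnorm : ∀ u : H, RCLike.re (inner ℂ (A u) u : ℂ) = ‖SA u‖^2 := by
    intro u
    have : A u = SA (SA u) := by rw [← hSA2]; rfl
    rw [this]
    have h1 : (inner ℂ (SA (SA u)) u : ℂ) = inner ℂ (SA u) (SA u) := by
      have h := ContinuousLinearMap.adjoint_inner_left SA u (SA u)
      rw [hSA.isSelfAdjoint.adjoint_eq] at h
      exact h
    rw [h1]
    exact inner_self_eq_norm_sq _
  have hBnorm : ∀ v : H, RCLike.re (inner ℂ (B v) v : ℂ) = ‖SB v‖^2 := by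
    intro v
    have : B v = SB (SB v) := by rw [← hSB2]; rfl
    rw [this]
    have h1 : (inner ℂ (SB (SB v)) v : ℂ) = inner ℂ (SB v) (SB v) := by
      have h := ContinuousLinearMap.adjoint_inner_left SB v (SB v)
      rw [hSB.isSelfAdjoint.adjoint_eq] at h
      exact h
    rw [h1]
    exact inner_self_eq_norm_sq _
  have pos' : ∀ u v : H,
      0 ≤ ‖SA u‖^2 + ‖SB v‖^2 + 2 * RCLike.re (inner ℂ (X v) u : ℂ) := by
    intro u v
    have := pos u v
    rw [hAnorm, hBnorm] at this
    exact this
  -- Step 2: key Cauchy–Schwarz-type inequality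
  have key : ∀ u v : H, ‖(inner ℂ (X v) u : ℂ)‖ ≤ ‖SA u‖ * ‖SB v‖ := by
    intro u v
    set z : ℂ := inner ℂ (X v) u with hz
    set m : ℝ := ‖z‖ with hmdef
    set a : ℝ := ‖SA u‖ with hadef
    set b : ℝ := ‖SB v‖ with hbdef
    have hm : 0 ≤ m := norm_nonneg _
    have ha : 0 ≤ a := norm_nonneg _
    have hb : 0 ≤ b := norm_nonneg _
    rcases eq_or_lt_of_le hm with hm0 | hm0
    · rw [← hm0]; positivity
    have hquad : ∀ t : ℝ, 0 < t → 2*t*m ≤ a^2*t^2 + b^2 := by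
      intro t ht
      set θ : ℂ := -(starRingEnd ℂ z) / (m : ℂ) with hθ
      have hmne : (m : ℂ) ≠ 0 := by
        simp only [ne_eq, Complex.ofReal_eq_zero]
        exact ne_of_gt hm0
      have hθnorm : ‖θ‖ = 1 := by
        have hmm : ‖(m : ℂ)‖ = m := by
          simp [Complex.norm_real, Real.norm_eq_abs, abs_of_nonneg hm]
        rw [hθ, norm_div, norm_neg, RCLike.norm_conj, hmm, ← hmdef, div_self hm0.ne']
      have hθz : θ * z = -(m : ℂ) := by
        rw [hθ, div_mul_eq_mul_div, neg_mul, RCLike.conj_mul, ← hmdef, sq]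
        field_simp
        rfl
      set c : ℂ := (t : ℂ) * θ with hc
      have hcnorm : ‖c‖ = t := by
        rw [hc, norm_mul, hθnorm, mul_one, Complex.norm_real, Real.norm_eq_abs,
          abs_of_pos ht]
      have h := pos' (c • u) v
      have hSAc : ‖SA (c • u)‖ = t * a := by
        rw [map_smul, norm_smul, hcnorm, hadef]
      have hinner : RCLike.re (inner ℂ (X v) (c • u) : ℂ) = -(t * m) := by
        rw [inner_smul_right, ← hz, hc, mul_assoc, hθz]
        have : (t : ℂ) * -(m : ℂ) = ((-(t*m) : ℝ) : ℂ) := by push_cast; ring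
        rw [this]
        simp
      rw [hSAc, hinner] at h
      nlinarith
    have hsq : m^2 ≤ (a^2) * (b^2) := quad_aux (a^2) (b^2) m (by positivity) (by positivity)
      hm hquad
    have hab : 0 ≤ a * b := mul_nonneg ha hb
    nlinarith [hsq, hab, hm]
  constructor
  · rintro y ⟨v, rfl⟩
    apply mem_range_of_inner_le SA hSA.isSelfAdjoint (X v) ‖SB v‖
    intro x
    have := key x v
    rw [mul_comm] at this
    exact this
  · rintro y ⟨u, rfl⟩
    apply mem_range_of_inner_le SB hSB.isSelfAdjoint ((adjoint X) u) ‖SA u‖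
    intro x
    have h1 : (inner ℂ ((adjoint X) u) x : ℂ) = inner ℂ u (X x) := adjoint_inner_left X x u
    have h2 : ‖(inner ℂ u (X x) : ℂ)‖ = ‖(inner ℂ (X x) u : ℂ)‖ := by
      rw [← inner_conj_symm]; exact RCLike.norm_conj _
    rw [h1, h2]
    exact key u x
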